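/- With p_min = min_k p_k, the second moment of the coupon collector time satisfies E[N²] ≤ 2 p_min^{−2} Σ_{k=1}^K C(K,k)/k², and consequently Var(N) ≤ 2 p_min^{−2} Σ_{k=1}^K C(K,k)/k². -/

import Mathlib

open MeasureTheory ProbabilityTheory intervalIntegral

/-- Coupon collector second-moment bound: `E[N²] ≤ 2 p_min⁻² Σ_{k=1}^K C(K,k)/k²`, and
consequently `Var(N)` satisfies the same bound. -/
theorem coupon_collector_second_moment_bound {Ω : Type*} [MeasurableSpace Ω]
    (μ : Measure Ω) [IsProbabilityMeasure μ]
    (K : ℕ) (hK : 0 < K) (p : Fin K → ℝ) (hp : ∀ k, 0 < p k)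
    (T : Fin K → Ω → ℝ) (hmeas : ∀ k, Measurable (T k))
    (hindep : iIndepFun T μ)
    (hexp : ∀ k (t : ℝ), 0 ≤ t →
      μ {ω | t < T k ω} = ENNReal.ofReal (Real.exp (-(p k) * t)))
    (N : Ω → ℝ) (hN : ∀ ω, N ω = ⨆ k, T k ω)
    (pmin : ℝ) (hpmin : pmin = ⨅ k, p k) :
    (∫ ω, (N ω) ^ 2 ∂μ ≤
      2 * pmin⁻¹ ^ 2 * ∑ k ∈ Finset.Icc 1 K, (K.choose k : ℝ) / k ^ 2) ∧
    (variance N μ ≤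
      2 * pmin⁻¹ ^ 2 * ∑ k ∈ Finset.Icc 1 K, (K.choose k : ℝ) / k ^ 2) := by
  have hKne : Nonempty (Fin K) := ⟨⟨0, hK⟩⟩
  -- pmin positivity
  have hpmin_pos : 0 < pmin := by
    obtain ⟨j, hj⟩ := exists_eq_ciInf_of_finite (f := p)
    rw [hpmin, ← hj]; exact hp j
  have hpmin_le : ∀ k, pmin ≤ p k := by
    intro k
    rw [hpmin]
    exact ciInf_le (Set.Finite.bddBelow (Set.finite_range p)) k
  -- a.e. positivity of each T k
  have hTpos : ∀ k, ∀ᵐ ω ∂μ, 0 < T k ω := by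
    intro k
    have h0 := hexp k 0 le_rfl
    simp only [mul_zero, Real.exp_zero, ENNReal.ofReal_one] at h0
    have hms : MeasurableSet {ω | (0:ℝ) < T k ω} :=
      measurableSet_lt measurable_const (hmeas k)
    have hc : μ {ω | (0:ℝ) < T k ω}ᶜ = 0 := by
      rw [measure_compl hms (measure_ne_top μ _), h0, measure_univ, tsub_self]
    rw [ae_iff]
    convert hc using 2
    ext ω; simp
  have hTpos_all : ∀ᵐ ω ∂μ, ∀ k, 0 < T k ω := by
    rw [ae_all_iff]; exact hTpos
  -- N nonneg a.e. and pointwise bound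
  have hNmeas : Measurable N := by
    have : Measurable fun ω => ⨆ k, T k ω := Measurable.iSup hmeas
    convert this using 1
    funext ω; exact hN ω
  have hptwise : ∀ᵐ ω ∂μ, 0 ≤ N ω ∧ N ω ^ 2 ≤ ∑ k, T k ω ^ 2 := by
    filter_upwards [hTpos_all] with ω hω
    obtain ⟨j, hj⟩ := exists_eq_ciSup_of_finite (f := fun k => T k ω)
    have hNω : N ω = T j ω := by rw [hN ω, ← hj]
    constructor
    · rw [hNω]; exact (hω j).le
    · rw [hNω]
      exact Finset.single_le_sum (f := fun k => T k ω ^ 2)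
        (fun i _ => sq_nonneg _) (Finset.mem_univ j)
  have hN_nn : 0 ≤ᵐ[μ] fun ω => N ω ^ 2 := by
    filter_upwards with ω; exact sq_nonneg _
  -- per-k lintegral computation
  have hLk : ∀ k, ∫⁻ ω, ENNReal.ofReal (T k ω ^ 2) ∂μ
      = ENNReal.ofReal (2 * (p k)⁻¹ ^ 2) := by
    intro k
    have g_cont : Continuous (fun t : ℝ => 2 * t) := by continuity
    have g_nn : ∀ᵐ t ∂(volume.restrict (Set.Ioi (0:ℝ))), 0 ≤ 2 * t := by
      filter_upwards [ae_restrict_mem measurableSet_Ioi] with t ht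
      have : (0:ℝ) < t := ht
      positivity
    have key := lintegral_comp_eq_lintegral_meas_lt_mul μ
      (f := T k) (g := fun t => 2 * t)
      ((hTpos k).mono fun ω h => h.le) (hmeas k).aemeasurable
      (fun t _ => g_cont.intervalIntegrable 0 t) g_nn
    have hsq : ∀ ω, (∫ t in (0:ℝ)..T k ω, 2 * t) = T k ω ^ 2 := by
      intro ω
      rw [intervalIntegral.integral_const_mul]
      rw [integral_id]
      ring
    simp_rw [hsq] at key
    rw [key]
    have hint : IntegrableOn (fun t : ℝ => t * Real.exp (-(p k * t))) (Set.Ioi 0) := by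
      have := integrableOn_rpow_mul_exp_neg_mul_rpow (s := 1) (p := 1)
        (b := p k) (by norm_num) (by norm_num) (hp k)
      simpa [Real.rpow_one] using this
    have heq : ∫⁻ t in Set.Ioi 0, μ {a | t < T k a} * ENNReal.ofReal (2 * t)
        = ∫⁻ t in Set.Ioi 0, ENNReal.ofReal (2 * (t * Real.exp (-(p k * t)))) := by
      apply setLIntegral_congr_fun measurableSet_Ioi
      intro t ht
      beta_reduce
      rw [hexp k t ht.le, ← ENNReal.ofReal_mul (Real.exp_nonneg _)]
      congr 1
      rw [neg_mul]
      ring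
    have h_nn : ∀ᵐ t ∂(volume.restrict (Set.Ioi (0:ℝ))),
        0 ≤ 2 * (t * Real.exp (-(p k * t))) := by
      filter_upwards [ae_restrict_mem measurableSet_Ioi] with t ht
      have : (0:ℝ) < t := ht
      positivity
    have hint2 : Integrable (fun t : ℝ => 2 * (t * Real.exp (-(p k * t))))
        (volume.restrict (Set.Ioi 0)) := hint.const_mul 2
    rw [heq, ← ofReal_integral_eq_lintegral_ofReal hint2 h_nn]
    congr 1
    rw [MeasureTheory.integral_const_mul]
    have hval : ∫ t in Set.Ioi (0:ℝ), t * Real.exp (-(p k * t)) = (p k)⁻¹ ^ 2 := by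
      have := Real.integral_rpow_mul_exp_neg_mul_Ioi (a := 2) (r := p k)
        (by norm_num) (hp k)
      rw [show (2:ℝ) - 1 = 1 by norm_num] at this
      simp only [Real.rpow_one] at this
      rw [this, Real.Gamma_two, mul_one, one_div]
      rw [← Real.rpow_natCast (p k)⁻¹ 2]
      norm_num
    rw [hval]
  -- total lintegral bound
  set B : ℝ := 2 * pmin⁻¹ ^ 2 * K with hB
  have hB_nn : 0 ≤ B := by positivity
  have hsum_le : ∑ k : Fin K, ∫⁻ ω, ENNReal.ofReal (T k ω ^ 2) ∂μ
      ≤ ENNReal.ofReal B := by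
    calc ∑ k : Fin K, ∫⁻ ω, ENNReal.ofReal (T k ω ^ 2) ∂μ
        = ∑ k : Fin K, ENNReal.ofReal (2 * (p k)⁻¹ ^ 2) := by
          exact Finset.sum_congr rfl fun k _ => hLk k
      _ ≤ ∑ _k : Fin K, ENNReal.ofReal (2 * pmin⁻¹ ^ 2) := by
          apply Finset.sum_le_sum
          intro k _
          apply ENNReal.ofReal_le_ofReal
          have h1 : (p k)⁻¹ ≤ pmin⁻¹ := by
            apply inv_anti₀ hpmin_pos (hpmin_le k)
          have h2 : 0 ≤ (p k)⁻¹ := inv_nonneg.mpr (hp k).le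
          nlinarith
      _ = ENNReal.ofReal B := by
          rw [Finset.sum_const, Finset.card_univ, Fintype.card_fin, hB]
          rw [nsmul_eq_mul, ← ENNReal.ofReal_natCast, ← ENNReal.ofReal_mul (by positivity)]
          ring_nf
  have hlin : ∫⁻ ω, ENNReal.ofReal (N ω ^ 2) ∂μ ≤ ENNReal.ofReal B := by
    refine le_trans ?_ hsum_le
    rw [← lintegral_finset_sum _ (fun k _ => ((hmeas k).pow_const 2).ennreal_ofReal)]
    apply lintegral_mono_ae
    filter_upwards [hptwise] with ω hω
    calc ENNReal.ofReal (N ω ^ 2) ≤ ENNReal.ofReal (∑ k, T k ω ^ 2) :=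
          ENNReal.ofReal_le_ofReal hω.2
      _ = ∑ k, ENNReal.ofReal (T k ω ^ 2) :=
          ENNReal.ofReal_sum_of_nonneg (fun k _ => sq_nonneg _)
  -- integrability and Bochner integral bound
  have hint : Integrable (fun ω => N ω ^ 2) μ := by
    refine ⟨(hNmeas.pow_const 2).aestronglyMeasurable, ?_⟩
    rw [hasFiniteIntegral_iff_ofReal hN_nn]
    exact lt_of_le_of_lt hlin ENNReal.ofReal_lt_top
  have hInt_le : ∫ ω, N ω ^ 2 ∂μ ≤ B := by
    rw [integral_eq_lintegral_of_nonneg_ae hN_nn (hNmeas.pow_const 2).aestronglyMeasurable]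
    calc (∫⁻ ω, ENNReal.ofReal (N ω ^ 2) ∂μ).toReal
        ≤ (ENNReal.ofReal B).toReal := by
          apply ENNReal.toReal_mono ENNReal.ofReal_ne_top hlin
      _ = B := ENNReal.toReal_ofReal hB_nn
  -- K ≤ sum
  have hKsum : (K:ℝ) ≤ ∑ k ∈ Finset.Icc 1 K, (K.choose k : ℝ) / k ^ 2 := by
    have h1 : (1:ℕ) ∈ Finset.Icc 1 K := Finset.mem_Icc.mpr ⟨le_rfl, hK⟩
    have := Finset.single_le_sum (f := fun k : ℕ => (K.choose k : ℝ) / k ^ 2)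
      (fun i _ => by positivity) h1
    simpa using this
  have hfinal : B ≤ 2 * pmin⁻¹ ^ 2 * ∑ k ∈ Finset.Icc 1 K, (K.choose k : ℝ) / k ^ 2 := by
    rw [hB]
    apply mul_le_mul_of_nonneg_left hKsum (by positivity)
  constructor
  · exact le_trans hInt_le hfinal
  · have hv := variance_le_expectation_sq (μ := μ) (X := N) hNmeas.aestronglyMeasurable
    refine le_trans (le_trans hv ?_) (le_trans hInt_le hfinal)
    simp only [Pi.pow_apply]
    exact le_refl _
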